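/- There is no isometry from any nonempty open subset of the unit 2-sphere (with its intrinsic/geodesic metric) onto a subset of the Euclidean plane. -/

import Mathlib

open scoped RealInnerProductSpace
open Real
set_option maxHeartbeats 2000000

lemma key_sin_ineq {δ : ℝ} (h0 : 0 < δ) (h1 : Real.sqrt 2 * δ ≤ 1) :
    Real.sin (Real.sqrt 2 * δ) < Real.sqrt 2 * Real.sin δ := by
  set s := Real.sqrt 2 with hs
  have s2 : s ^ 2 = 2 := Real.sq_sqrt (by norm_num)
  have hs1 : 1 < s := by nlinarith [Real.sqrt_nonneg 2]
  have hδ1 : δ ≤ 1 := by nlinarith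
  have hb1 := abs_sub_le_iff.1 (Real.sin_bound (x := s * δ)
    (by rw [abs_of_nonneg (by positivity)]; exact h1))
  have hb2 := abs_sub_le_iff.1 (Real.sin_bound (x := δ)
    (by rw [abs_of_nonneg h0.le]; exact hδ1))
  rw [abs_of_nonneg (by positivity)] at hb1
  rw [abs_of_nonneg h0.le] at hb2
  have h1' := hb1.1
  have h2' := hb2.2
  have e3 : (s * δ) ^ 3 = 2 * s * δ ^ 3 := by
    linear_combination (s * δ ^ 3) * s2
  have e4 : (s * δ) ^ 5 = 4 * s * δ ^ 5 := by
    linear_combination (s * (s ^ 2 + 2) * δ ^ 5) * s2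
  have hd3 : (0:ℝ) < δ ^ 3 := by positivity
  have hA : s * (δ - δ ^ 3 / 6 - Real.sin δ) ≤ s * (δ ^ 5 / 100) :=
    mul_le_mul_of_nonneg_left h2' (by positivity)
  have hB : δ ^ 3 * (s * δ) ≤ δ ^ 3 * 1 :=
    mul_le_mul_of_nonneg_left h1 (by positivity)
  rw [e3, e4] at h1'
  have hB2 : δ ^ 5 ≤ δ ^ 3 := by nlinarith
  have hC : s * δ ^ 5 ≤ s * δ ^ 3 := mul_le_mul_of_nonneg_left hB2 (by positivity)
  nlinarith [h1', hA, hB, hd3, hs1, hC, mul_pos (by positivity : (0:ℝ) < s) hd3]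

/-- There is no isometry from any nonempty open subset of the unit 2-sphere
(with its intrinsic/geodesic metric `d_S(p,q) = arccos ⟪p,q⟫`) onto a subset of
the Euclidean plane. -/
theorem no_isometry_sphere_to_plane :
    ¬ ∃ (U : Set (Metric.sphere (0 : EuclideanSpace ℝ (Fin 3)) 1))
        (f : Metric.sphere (0 : EuclideanSpace ℝ (Fin 3)) 1 → EuclideanSpace ℝ (Fin 2)),
      IsOpen U ∧ U.Nonempty ∧
      ∀ p ∈ U, ∀ q ∈ U,
        dist (f p) (f q) = Real.arccos ⟪(p : EuclideanSpace ℝ (Fin 3)), (q : EuclideanSpace ℝ (Fin 3))⟫ := by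
  rintro ⟨U, f, hUopen, ⟨P, hP⟩, hf⟩
  obtain ⟨r, hr, hball⟩ := Metric.isOpen_iff.1 hUopen P hP
  set p : (EuclideanSpace ℝ (Fin 3)) := (P : (EuclideanSpace ℝ (Fin 3))) with hp_def
  have hpnorm : ‖p‖ = 1 := by
    have := P.2
    rwa [mem_sphere_zero_iff_norm] at this
  -- extend p to an orthonormal basis
  have hcard : Module.finrank ℝ (EuclideanSpace ℝ (Fin 3)) = Fintype.card (Fin 3) := by simp
  have horth : Orthonormal ℝ (Set.restrict {0} ![p, 0, 0]) := by
    constructor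
    · rintro ⟨i, hi⟩
      have : i = 0 := hi
      subst this
      show ‖p‖ = 1; exact hpnorm
    · intro i j hij
      have hi : (i : Fin 3) = 0 := i.2
      have hj : (j : Fin 3) = 0 := j.2
      exact absurd (Subtype.ext (hi.trans hj.symm)) hij
  obtain ⟨b, hb⟩ := horth.exists_orthonormalBasis_extension_of_card_eq hcard
  have hb0 : b 0 = p := by simpa using hb 0 rfl
  set u : (EuclideanSpace ℝ (Fin 3)) := b 1 with hu_def
  set v : (EuclideanSpace ℝ (Fin 3)) := b 2 with hv_def
  have hON := b.orthonormal
  have hpp : ⟪p, p⟫ = 1 := by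
    rw [real_inner_self_eq_norm_sq, hpnorm]; norm_num
  have huu : ⟪u, u⟫ = 1 := by
    rw [real_inner_self_eq_norm_sq, hON.1 1]; norm_num
  have hvv : ⟪v, v⟫ = 1 := by
    rw [real_inner_self_eq_norm_sq, hON.1 2]; norm_num
  have hpu : ⟪p, u⟫ = 0 := by rw [← hb0]; exact hON.2 (by decide)
  have hpv : ⟪p, v⟫ = 0 := by rw [← hb0]; exact hON.2 (by decide)
  have huv : ⟪u, v⟫ = 0 := hON.2 (by decide)
  have hup : ⟪u, p⟫ = 0 := by rw [real_inner_comm]; exact hpu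
  have hvp : ⟪v, p⟫ = 0 := by rw [real_inner_comm]; exact hpv
  have hvu : ⟪v, u⟫ = 0 := by rw [real_inner_comm]; exact huv
  -- choose ε
  set ε : ℝ := min r 1 / 2 with hε_def
  have hε0 : 0 < ε := by positivity
  have hεr : ε < r := by
    simp only [hε_def]; linarith only [min_le_left r 1, hr]
  have hε1 : ε ≤ 1 / 2 := by
    simp only [hε_def]; linarith only [min_le_right r 1]
  have hεπ : ε ≤ π := by linarith only [Real.pi_gt_three, hε1]
  have h2επ : 2 * ε ≤ π := by linarith only [Real.pi_gt_three, hε1]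
  -- the four points
  set a : (EuclideanSpace ℝ (Fin 3)) := cos ε • p + sin ε • u with ha_def
  set c : (EuclideanSpace ℝ (Fin 3)) := cos ε • p - sin ε • u with hc_def
  set x : (EuclideanSpace ℝ (Fin 3)) := cos ε • p + sin ε • v with hx_def
  have hcs : cos ε ^ 2 + sin ε ^ 2 = 1 := by
    rw [add_comm]; exact Real.sin_sq_add_cos_sq ε
  -- inner products
  have hiaa : ⟪a, a⟫ = 1 := by
    simp only [ha_def, inner_add_left, inner_add_right, real_inner_smul_left,
      real_inner_smul_right, hpp, hpu, hup, huu, huv, hvu, hvv, hpv, hvp]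
    linear_combination hcs
  have hicc : ⟪c, c⟫ = 1 := by
    simp only [hc_def, inner_sub_left, inner_sub_right, real_inner_smul_left,
      real_inner_smul_right, hpp, hpu, hup, huu]
    linear_combination hcs
  have hixx : ⟪x, x⟫ = 1 := by
    simp only [hx_def, inner_add_left, inner_add_right, real_inner_smul_left,
      real_inner_smul_right, hpp, hpv, hvp, hvv]
    linear_combination hcs
  have hiap : ⟪a, p⟫ = cos ε := by
    simp only [ha_def, inner_add_left, real_inner_smul_left, hpp, hup]
    ring
  have hicp : ⟪c, p⟫ = cos ε := by
    simp only [hc_def, inner_sub_left, real_inner_smul_left, hpp, hup]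
    ring
  have hixp : ⟪x, p⟫ = cos ε := by
    simp only [hx_def, inner_add_left, real_inner_smul_left, hpp, hvp]
    ring
  have hiac : ⟪a, c⟫ = cos (2 * ε) := by
    simp only [ha_def, hc_def, inner_add_left, inner_sub_right, real_inner_smul_left,
      real_inner_smul_right, hpp, hpu, hup, huu]
    rw [Real.cos_two_mul]
    linear_combination -hcs
  have hiax : ⟪a, x⟫ = cos ε ^ 2 := by
    simp only [ha_def, hx_def, inner_add_left, inner_add_right, real_inner_smul_left,
      real_inner_smul_right, hpp, hpu, hup, hpv, hvp, huv]
    ring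
  have hicx : ⟪c, x⟫ = cos ε ^ 2 := by
    simp only [hc_def, hx_def, inner_sub_left, inner_add_left, inner_add_right,
      real_inner_smul_left, real_inner_smul_right, hpp, hpu, hup, hpv, hvp, huv]
    ring
  -- sphere membership
  have sphere_mem : ∀ w : (EuclideanSpace ℝ (Fin 3)), ⟪w, w⟫ = 1 → w ∈ Metric.sphere (0 : (EuclideanSpace ℝ (Fin 3))) 1 := by
    intro w hw
    rw [mem_sphere_zero_iff_norm]
    have hsq : ‖w‖ ^ 2 = 1 := by rw [← real_inner_self_eq_norm_sq]; exact hw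
    have hfac : (‖w‖ - 1) * (‖w‖ + 1) = 0 := by linear_combination hsq
    rcases mul_eq_zero.1 hfac with h | h
    · linarith only [h]
    · linarith only [h, norm_nonneg w]
  set A : Metric.sphere (0 : (EuclideanSpace ℝ (Fin 3))) 1 := ⟨a, sphere_mem a hiaa⟩ with hA_def
  set C : Metric.sphere (0 : (EuclideanSpace ℝ (Fin 3))) 1 := ⟨c, sphere_mem c hicc⟩ with hC_def
  set X : Metric.sphere (0 : (EuclideanSpace ℝ (Fin 3))) 1 := ⟨x, sphere_mem x hixx⟩ with hX_def
  -- ball membership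
  have cos_lb : 1 - ε ^ 2 / 2 ≤ cos ε := Real.one_sub_sq_div_two_le_cos
  have mem_ball : ∀ (W : Metric.sphere (0 : (EuclideanSpace ℝ (Fin 3))) 1), ⟪(W : (EuclideanSpace ℝ (Fin 3))), p⟫ = cos ε → W ∈ U := by
    intro W hW
    apply hball
    rw [Metric.mem_ball, Subtype.dist_eq, dist_eq_norm]
    have h2 : ‖(W : (EuclideanSpace ℝ (Fin 3))) - p‖ ^ 2 = 2 - 2 * cos ε := by
      rw [norm_sub_sq_real, hpnorm]
      have hWn : ‖(W : (EuclideanSpace ℝ (Fin 3)))‖ = 1 := by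
        have := W.2; rwa [mem_sphere_zero_iff_norm] at this
      rw [hWn, hW]; ring
    have hsq : ‖(W : (EuclideanSpace ℝ (Fin 3))) - p‖ ^ 2 ≤ ε ^ 2 := by
      rw [h2]; linarith only [cos_lb]
    have hWle : ‖(W : (EuclideanSpace ℝ (Fin 3))) - p‖ ≤ ε := by
      nlinarith only [hsq, norm_nonneg ((W : (EuclideanSpace ℝ (Fin 3))) - p), hε0]
    linarith only [hWle, hεr]
  have hAU : A ∈ U := mem_ball A hiap
  have hCU : C ∈ U := mem_ball C hicp
  have hXU : X ∈ U := mem_ball X hixp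
  -- distances in the plane
  have hdist_AP : dist (f A) (f P) = ε := by
    rw [hf A hAU P hP, hiap, Real.arccos_cos hε0.le hεπ]
  have hdist_CP : dist (f C) (f P) = ε := by
    rw [hf C hCU P hP, hicp, Real.arccos_cos hε0.le hεπ]
  have hdist_XP : dist (f X) (f P) = ε := by
    rw [hf X hXU P hP, hixp, Real.arccos_cos hε0.le hεπ]
  have hdist_AC : dist (f A) (f C) = 2 * ε := by
    rw [hf A hAU C hCU, hiac, Real.arccos_cos (by linarith) h2επ]
  have hdist_AX : dist (f A) (f X) = Real.arccos (cos ε ^ 2) := by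
    rw [hf A hAU X hXU, hiax]
  have hdist_CX : dist (f C) (f X) = Real.arccos (cos ε ^ 2) := by
    rw [hf C hCU X hXU, hicx]
  -- f P is the midpoint of f A and f C
  have hmid : f P = midpoint ℝ (f A) (f C) := by
    apply eq_midpoint_of_dist_eq_half
    · rw [hdist_AP, hdist_AC]; ring
    · rw [dist_comm (f P) (f C), hdist_CP, hdist_AC]; ring
  -- parallelogram law
  set D : ℝ := Real.arccos (cos ε ^ 2) with hD_def
  have hsum : f P + f P = f A + f C := by rw [hmid]; exact midpoint_add_self ℝ (f A) (f C)
  have hD2 : D ^ 2 = 2 * ε ^ 2 := by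
    have hpar := parallelogram_law_with_norm ℝ (f X - f P) (f P - f A)
    have e1 : f X - f P + (f P - f A) = f X - f A := by abel
    have hC2 : f C = f P + f P - f A := by rw [hsum]; abel
    have e2 : f X - f P - (f P - f A) = f X - f C := by rw [hC2]; abel
    rw [e1, e2] at hpar
    have n1 : ‖f X - f A‖ = D := by rw [← dist_eq_norm, dist_comm]; exact hdist_AX
    have n2 : ‖f X - f C‖ = D := by rw [← dist_eq_norm, dist_comm]; exact hdist_CX
    have n3 : ‖f X - f P‖ = ε := by rw [← dist_eq_norm]; exact hdist_XP
    have n4 : ‖f P - f A‖ = ε := by rw [← dist_eq_norm, dist_comm]; exact hdist_AP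
    rw [n1, n2, n3, n4] at hpar
    linear_combination hpar / 2
  have hD0 : 0 ≤ D := Real.arccos_nonneg _
  have s2 : Real.sqrt 2 ^ 2 = 2 := Real.sq_sqrt (by norm_num)
  have hs0 : (0:ℝ) < Real.sqrt 2 := Real.sqrt_pos.2 (by norm_num)
  have hDval : D = Real.sqrt 2 * ε := by
    have h1 : D = Real.sqrt (2 * ε ^ 2) := by
      rw [← hD2]; exact (Real.sqrt_sq hD0).symm
    rw [h1, Real.sqrt_mul (by norm_num), Real.sqrt_sq hε0.le]
  have hcosD : Real.cos D = cos ε ^ 2 := by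
    rw [hD_def]
    exact Real.cos_arccos (by linarith only [sq_nonneg (cos ε)]) (by linarith only [hcs, sq_nonneg (sin ε)])
  -- the contradiction
  have hrw2 : Real.sqrt 2 * ε = 2 * (ε / Real.sqrt 2) := by
    rw [mul_div_assoc' (2:ℝ) ε (Real.sqrt 2), eq_div_iff hs0.ne']
    linear_combination ε * s2
  have hcos2 : Real.cos (2 * (ε / Real.sqrt 2)) = 1 - 2 * Real.sin (ε / Real.sqrt 2) ^ 2 := by
    rw [Real.cos_two_mul]
    linear_combination 2 * (Real.sin_sq_add_cos_sq (ε / Real.sqrt 2))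
  have heq : 1 - 2 * Real.sin (ε / Real.sqrt 2) ^ 2 = cos ε ^ 2 := by
    rw [← hcos2, ← hrw2, ← hDval, hcosD]
  have hkey := key_sin_ineq (δ := ε / Real.sqrt 2) (by positivity)
    (by rw [mul_div_cancel₀ _ (ne_of_gt hs0)]; linarith)
  rw [mul_div_cancel₀ _ (ne_of_gt hs0)] at hkey
  have hsin0 : 0 ≤ Real.sin ε := Real.sin_nonneg_of_nonneg_of_le_pi hε0.le hεπ
  have hsq : Real.sin ε * Real.sin ε <
      (Real.sqrt 2 * Real.sin (ε / Real.sqrt 2)) * (Real.sqrt 2 * Real.sin (ε / Real.sqrt 2)) :=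
    mul_self_lt_mul_self hsin0 hkey
  have hring : (Real.sqrt 2 * Real.sin (ε / Real.sqrt 2)) * (Real.sqrt 2 * Real.sin (ε / Real.sqrt 2))
      = 2 * Real.sin (ε / Real.sqrt 2) ^ 2 := by
    linear_combination Real.sin (ε / Real.sqrt 2) ^ 2 * s2
  have hlt : Real.sin ε ^ 2 < 2 * Real.sin (ε / Real.sqrt 2) ^ 2 := by
    rw [pow_two]; linarith only [hsq, hring]
  linarith only [hlt, heq, hcs]
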